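/- There exists a constant C > 0, depending only on ν and K, such that for every ξ ∈ ℝ³ with ξ ≠ 0 and every ξ_* ∈ ℝ³, ∫_{𝕊²} b((ξ/|ξ|)·σ) 𝟙_{|ξ − |ξ|σ| ≥ ⟨ξ_*⟩} dσ ≤ C (⟨ξ⟩/⟨ξ_*⟩)^{ν} 𝟙_{√2 |ξ| ≥ ⟨ξ_*⟩}. -/

import Mathlib

open MeasureTheory Filter
open scoped Topology ENNReal InnerProductSpace FourierTransform

noncomputable section

/-- Velocity space `ℝ³`. -/
abbrev V3 : Type := EuclideanSpace ℝ (Fin 3)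

/-- Japanese bracket `⟨v⟩ = (1+|v|²)^{1/2}`. -/
def jap (v : V3) : ℝ := Real.sqrt (1 + ‖v‖ ^ 2)

/-- Normalized Maxwellian `μ(v) = (2π)^{-3/2} exp(-|v|²/2)`. -/
def maxw (v : V3) : ℝ := (2 * Real.pi) ^ (-(3 : ℝ) / 2) * Real.exp (-‖v‖ ^ 2 / 2)

/-- Surface measure on the unit sphere `𝕊² ⊂ ℝ³` (2-dimensional Hausdorff measure). -/
def sphereMeasure : Measure V3 := (μH[2] : Measure V3).restrict (Metric.sphere (0 : V3) 1)

/-- Post-collisional velocity `v' = (v+v_*)/2 + (|v-v_*|/2)σ`. -/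
def vPost (v vs σ : V3) : V3 := (2 : ℝ)⁻¹ • (v + vs) + (‖v - vs‖ / 2) • σ

/-- Post-collisional velocity `v'_* = (v+v_*)/2 - (|v-v_*|/2)σ`. -/
def vPostS (v vs σ : V3) : V3 := (2 : ℝ)⁻¹ • (v + vs) - (‖v - vs‖ / 2) • σ

/-- Deviation angle `θ`, `cos θ = ((v-v_*)/|v-v_*|)·σ`. -/
def dev (v vs σ : V3) : ℝ := Real.arccos ⟪‖v - vs‖⁻¹ • (v - vs), σ⟫_ℝ

/-- Collision kernel `B(v-v_*,σ) = |v-v_*|^γ b(((v-v_*)/|v-v_*|)·σ)`. -/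
def Bker (γ : ℝ) (b : ℝ → ℝ) (v vs σ : V3) : ℝ :=
  ‖v - vs‖ ^ γ * b ⟪‖v - vs‖⁻¹ • (v - vs), σ⟫_ℝ

/-- Angular-truncated trilinear pairing `∭_{θ ≥ ε} Bf (F'_* G' - F_* G) h`. -/
def QTrunc (Bf : V3 → V3 → V3 → ℝ) (F G h : V3 → ℝ) (ε : ℝ) : ℝ :=
  ∫ v : V3, ∫ vs : V3, ∫ σ : V3,
    (if ε ≤ dev v vs σ then
        Bf v vs σ * (F (vPostS v vs σ) * G (vPost v vs σ) - F vs * G v) * h v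
      else 0) ∂sphereMeasure

/-- Truncated pairing defining `⟨Γ(f,g), h⟩`. -/
def GammaTrunc (γ : ℝ) (b : ℝ → ℝ) (f g h : V3 → ℝ) (ε : ℝ) : ℝ :=
  QTrunc (fun v vs σ => Bker γ b v vs σ * Real.sqrt (maxw vs)) f g h ε

/-- Truncated pairing defining `⟨Q_c(F,G), h⟩` (kinetic factor cut off by `φ₀`). -/
def QcTrunc (γ : ℝ) (b φ₀ : ℝ → ℝ) (F G h : V3 → ℝ) (ε : ℝ) : ℝ :=
  QTrunc (fun v vs σ => φ₀ ‖v - vs‖ * Bker γ b v vs σ) F G h ε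

/-- Weighted `L²` norm `‖⟨·⟩^ℓ f‖_{L²}`. -/
def L2w (ℓ : ℝ) (f : V3 → ℝ) : ℝ :=
  (∫ v : V3, jap v ^ (2 * ℓ) * f v ^ 2) ^ ((1 : ℝ) / 2)

/-- Square of the non-isotropic triple norm (as an extended real). -/
def tripleNormSqE (γ : ℝ) (b : ℝ → ℝ) (f : V3 → ℝ) : ℝ≥0∞ :=
  (∫⁻ v : V3, ∫⁻ vs : V3, ∫⁻ σ : V3,
      ENNReal.ofReal (Bker γ b v vs σ * maxw vs * (f (vPost v vs σ) - f v) ^ 2) ∂sphereMeasure)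
    + ∫⁻ v : V3, ∫⁻ vs : V3, ∫⁻ σ : V3,
        ENNReal.ofReal (Bker γ b v vs σ * f vs ^ 2 *
          (Real.sqrt (maxw (vPost v vs σ)) - Real.sqrt (maxw v)) ^ 2) ∂sphereMeasure

/-- The triple norm `|||f|||`. -/
def tripleNorm (γ : ℝ) (b : ℝ → ℝ) (f : V3 → ℝ) : ℝ :=
  Real.sqrt (tripleNormSqE γ b f).toReal

/-- Dissipation functional `𝒟(F,φ) = ∭ B F_* (φ - φ')²`. -/
def Ddiss (γ : ℝ) (b : ℝ → ℝ) (F φ : V3 → ℝ) : ℝ :=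
  (∫⁻ v : V3, ∫⁻ vs : V3, ∫⁻ σ : V3,
      ENNReal.ofReal (Bker γ b v vs σ * F vs * (φ v - φ (vPost v vs σ)) ^ 2) ∂sphereMeasure).toReal

/-- Weighted Sobolev norm `‖f‖_{H^s_ℓ}`. -/
def sobNorm (s ℓ : ℝ) (f : V3 → ℝ) : ℝ :=
  (∫ ξ : V3, jap ξ ^ (2 * s) * ‖𝓕 (fun v : V3 => ((jap v ^ ℓ * f v : ℝ) : ℂ)) ξ‖ ^ 2) ^ ((1 : ℝ) / 2)

/-- Standing assumptions on the angular kernel `b`. -/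
def KernelHyp (ν K : ℝ) (b : ℝ → ℝ) : Prop :=
  Measurable b ∧ (∀ t, 0 ≤ b t) ∧ (∀ t < (0 : ℝ), b t = 0) ∧
    ∀ θ ∈ Set.Ioc (0 : ℝ) (Real.pi / 2),
      K⁻¹ * θ ^ (-2 - ν) ≤ b (Real.cos θ) ∧ b (Real.cos θ) ≤ K * θ ^ (-2 - ν)



set_option maxHeartbeats 1600000

section AuxLemmas
open Real
open scoped NNReal

lemma jap_one_le (v : V3) : 1 ≤ jap v := by
  rw [jap]
  have h := Real.sqrt_le_sqrt (show (1:ℝ) ≤ 1 + ‖v‖^2 by nlinarith [sq_nonneg ‖v‖])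
  simpa using h

lemma norm_le_jap (v : V3) : ‖v‖ ≤ jap v := by
  rw [jap]
  calc ‖v‖ = Real.sqrt (‖v‖^2) := (Real.sqrt_sq (norm_nonneg v)).symm
    _ ≤ Real.sqrt (1 + ‖v‖^2) := Real.sqrt_le_sqrt (by linarith)

lemma onb_with_first (u : V3) (hu : ‖u‖ = 1) :
    ∃ b : OrthonormalBasis (Fin 3) ℝ V3, b 0 = u := by
  have hcard : Module.finrank ℝ V3 = Fintype.card (Fin 3) := by
    simp [finrank_euclideanSpace_fin]
  have horth : Orthonormal ℝ (({0} : Set (Fin 3)).restrict (fun _ => u)) := by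
    constructor
    · intro i; exact hu
    · intro i j hij
      exfalso; apply hij; ext
      have hi := i.2; have hj := j.2
      simp only [Set.mem_singleton_iff] at hi hj
      rw [hi, hj]
  obtain ⟨b, hb⟩ := horth.exists_orthonormalBasis_extension_of_card_eq hcard
  exact ⟨b, hb 0 rfl⟩

lemma abs_sin_sub_sin_le (x y : ℝ) : |Real.sin x - Real.sin y| ≤ |x - y| := by
  rw [Real.sin_sub_sin]
  have h1 : |Real.sin ((x-y)/2)| ≤ |x-y|/2 := by
    simpa [abs_div] using Real.abs_sin_le_abs (x := (x-y)/2)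
  have h2 : |Real.cos ((x+y)/2)| ≤ 1 := Real.abs_cos_le_one _
  calc |2 * Real.sin ((x-y)/2) * Real.cos ((x+y)/2)|
      = 2 * |Real.sin ((x-y)/2)| * |Real.cos ((x+y)/2)| := by
        rw [abs_mul, abs_mul]; norm_num
    _ ≤ 2 * (|x-y|/2) * 1 := by
        apply mul_le_mul _ h2 (abs_nonneg _) (by positivity)
        apply mul_le_mul le_rfl h1 (abs_nonneg _) (by norm_num)
    _ = |x - y| := by ring

lemma abs_cos_sub_cos_le (x y : ℝ) : |Real.cos x - Real.cos y| ≤ |x - y| := by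
  rw [Real.cos_sub_cos]
  have h1 : |Real.sin ((x-y)/2)| ≤ |x-y|/2 := by
    simpa [abs_div] using Real.abs_sin_le_abs (x := (x-y)/2)
  have h2 : |Real.sin ((x+y)/2)| ≤ 1 := Real.abs_sin_le_one _
  calc |(-2) * Real.sin ((x+y)/2) * Real.sin ((x-y)/2)|
      = 2 * |Real.sin ((x+y)/2)| * |Real.sin ((x-y)/2)| := by
        rw [abs_mul, abs_mul]; norm_num
    _ ≤ 2 * 1 * (|x-y|/2) := by
        apply mul_le_mul _ h1 (abs_nonneg _) (by positivity)
        apply mul_le_mul le_rfl h2 (abs_nonneg _) (by norm_num)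
    _ = |x - y| := by ring

/-- Measure of a spherical cap of opening angle `α` is at most `50 π α²`. -/
lemma cap_measure_le (u : V3) (hu : ‖u‖ = 1) (α : ℝ) (hα : 0 < α) (hα2 : α ≤ π/2) :
    (μH[2] : Measure V3) (Metric.sphere (0:V3) 1 ∩ {σ | Real.cos α ≤ ⟪u, σ⟫_ℝ})
      ≤ ENNReal.ofReal (50 * π * α^2) := by
  obtain ⟨b, hb0⟩ := onb_with_first u hu
  set v := b 1 with hv
  set w := b 2 with hw
  have hnv : ‖v‖ = 1 := b.orthonormal.1 1
  have hnw : ‖w‖ = 1 := b.orthonormal.1 2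
  have hαne : α ≠ 0 := ne_of_gt hα
  set Ψ : (Fin 2 → ℝ) → V3 := fun p =>
    Real.cos (p 0) • u + (Real.sin (p 0) * Real.cos (p 1 / α)) • v
      + (Real.sin (p 0) * Real.sin (p 1 / α)) • w with hΨ
  set D : Set (Fin 2 → ℝ) :=
    Set.univ.pi (fun i : Fin 2 => if i = 0 then Set.Icc 0 α else Set.Icc (-(π*α)) (π*α)) with hD
  have hmemD : ∀ p : Fin 2 → ℝ, p ∈ D ↔ (p 0 ∈ Set.Icc (0:ℝ) α ∧ p 1 ∈ Set.Icc (-(π*α)) (π*α)) := by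
    intro p
    rw [hD, Set.mem_univ_pi]
    constructor
    · intro h; exact ⟨by simpa using h 0, by simpa using h 1⟩
    · rintro ⟨h0, h1⟩ i
      fin_cases i
      · simpa using h0
      · simpa using h1
  have hlip : LipschitzOnWith 5 Ψ D := by
    rw [lipschitzOnWith_iff_dist_le_mul]
    intro p hp q hq
    rw [hmemD] at hp hq
    have h0 : |p 0 - q 0| ≤ dist p q := by
      simpa [Real.dist_eq] using dist_le_pi_dist p q 0
    have h1 : |p 1 - q 1| ≤ dist p q := by
      simpa [Real.dist_eq] using dist_le_pi_dist p q 1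
    have hsq0 : 0 ≤ Real.sin (q 0) := by
      apply Real.sin_nonneg_of_nonneg_of_le_pi hq.1.1
      linarith [hq.1.2, Real.pi_pos]
    have hsqle : Real.sin (q 0) ≤ α := le_trans (Real.sin_le hq.1.1) hq.1.2
    have hdivd : |p 1 / α - q 1 / α| = |p 1 - q 1| / α := by
      rw [div_sub_div_same, abs_div, abs_of_pos hα]
    have key : ∀ f : ℝ → ℝ, (∀ x y, |f x - f y| ≤ |x - y|) → (∀ x, |f x| ≤ 1) →
        |Real.sin (p 0) * f (p 1 / α) - Real.sin (q 0) * f (q 1 / α)|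
          ≤ |p 0 - q 0| + |p 1 - q 1| := by
      intro f hlf hbf
      have hdecomp : Real.sin (p 0) * f (p 1 / α) - Real.sin (q 0) * f (q 1 / α)
          = (Real.sin (p 0) - Real.sin (q 0)) * f (p 1 / α)
            + Real.sin (q 0) * (f (p 1 / α) - f (q 1 / α)) := by ring
      rw [hdecomp]
      refine le_trans (abs_add_le _ _) ?_
      have e1 : |(Real.sin (p 0) - Real.sin (q 0)) * f (p 1 / α)| ≤ |p 0 - q 0| := by
        rw [abs_mul]
        calc |Real.sin (p 0) - Real.sin (q 0)| * |f (p 1 / α)|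
            ≤ |p 0 - q 0| * 1 :=
              mul_le_mul (_root_.abs_sin_sub_sin_le _ _) (hbf _) (abs_nonneg _) (abs_nonneg _)
          _ = |p 0 - q 0| := mul_one _
      have e2 : |Real.sin (q 0) * (f (p 1 / α) - f (q 1 / α))| ≤ |p 1 - q 1| := by
        rw [abs_mul, abs_of_nonneg hsq0]
        calc Real.sin (q 0) * |f (p 1 / α) - f (q 1 / α)|
            ≤ α * (|p 1 - q 1| / α) := by
              apply mul_le_mul hsqle _ (abs_nonneg _) hα.le
              rw [← hdivd]; exact hlf _ _
          _ = |p 1 - q 1| := by field_simp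
      linarith
    have hcos := key Real.cos _root_.abs_cos_sub_cos_le Real.abs_cos_le_one
    have hsin := key Real.sin _root_.abs_sin_sub_sin_le Real.abs_sin_le_one
    have hdiff : Ψ p - Ψ q = (Real.cos (p 0) - Real.cos (q 0)) • u
        + (Real.sin (p 0) * Real.cos (p 1 / α) - Real.sin (q 0) * Real.cos (q 1 / α)) • v
        + (Real.sin (p 0) * Real.sin (p 1 / α) - Real.sin (q 0) * Real.sin (q 1 / α)) • w := by
      simp only [hΨ, sub_smul]
      abel
    rw [dist_eq_norm, hdiff]
    have hnrm : ‖(Real.cos (p 0) - Real.cos (q 0)) • u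
        + (Real.sin (p 0) * Real.cos (p 1 / α) - Real.sin (q 0) * Real.cos (q 1 / α)) • v
        + (Real.sin (p 0) * Real.sin (p 1 / α) - Real.sin (q 0) * Real.sin (q 1 / α)) • w‖
        ≤ |Real.cos (p 0) - Real.cos (q 0)|
          + |Real.sin (p 0) * Real.cos (p 1 / α) - Real.sin (q 0) * Real.cos (q 1 / α)|
          + |Real.sin (p 0) * Real.sin (p 1 / α) - Real.sin (q 0) * Real.sin (q 1 / α)| := by
      refine le_trans (norm_add_le _ _) ?_
      refine add_le_add (le_trans (norm_add_le _ _) ?_) ?_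
      · apply add_le_add <;> rw [norm_smul] <;> simp [hu, hnv, Real.norm_eq_abs]
      · rw [norm_smul]; simp [hnw, Real.norm_eq_abs]
    refine le_trans hnrm ?_
    have hc := _root_.abs_cos_sub_cos_le (p 0) (q 0)
    have h5 : ((5:ℝ≥0):ℝ) = 5 := by norm_num
    rw [h5]
    linarith
  have hsubset : Metric.sphere (0:V3) 1 ∩ {σ | Real.cos α ≤ ⟪u, σ⟫_ℝ} ⊆ Ψ '' D := by
    rintro σ ⟨hσs, hσc⟩
    have hσ : ‖σ‖ = 1 := by simpa using hσs
    set t := ⟪u, σ⟫_ℝ with htdef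
    set A := ⟪v, σ⟫_ℝ with hAdef
    set Cc := ⟪w, σ⟫_ℝ with hCdef
    have hσc' : Real.cos α ≤ t := hσc
    have hcosα : (0:ℝ) ≤ Real.cos α :=
      Real.cos_nonneg_of_mem_Icc ⟨by linarith [Real.pi_pos], hα2⟩
    have ht0 : 0 ≤ t := le_trans hcosα hσc'
    have hpar : t*t + A*A + Cc*Cc = 1 := by
      have hps := b.sum_inner_mul_inner σ σ
      rw [Fin.sum_univ_three] at hps
      have hself : ⟪σ, σ⟫_ℝ = 1 := by
        rw [real_inner_self_eq_norm_mul_norm, hσ]; ring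
      rw [hself, hb0, ← hv, ← hw, ← real_inner_comm σ u, ← real_inner_comm σ v,
        ← real_inner_comm σ w] at hps
      rw [htdef, hAdef, hCdef]
      exact hps
    have hdecomp : σ = t • u + A • v + Cc • w := by
      have hsr := b.sum_repr σ
      rw [Fin.sum_univ_three] at hsr
      simp only [b.repr_apply_apply] at hsr
      rw [hb0, ← hv, ← hw] at hsr
      rw [htdef, hAdef, hCdef]
      exact hsr.symm
    have ht1 : t ≤ 1 := by nlinarith
    have htm1 : (-1:ℝ) ≤ t := by linarith
    set θ := Real.arccos t with hθdef
    have hθ0 : 0 ≤ θ := Real.arccos_nonneg t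
    have hθpi : θ ≤ π := Real.arccos_le_pi t
    have hcosθ : Real.cos θ = t := Real.cos_arccos htm1 ht1
    have hθα : θ ≤ α := by
      by_contra hcon
      push_neg at hcon
      have := Real.cos_lt_cos_of_nonneg_of_le_pi hα.le hθpi hcon
      rw [hcosθ] at this
      linarith
    have hsinθ : Real.sin θ ^ 2 = A^2 + Cc^2 := by
      have hsc := Real.sin_sq_add_cos_sq θ
      nlinarith [hcosθ]
    by_cases hzero : A = 0 ∧ Cc = 0
    · obtain ⟨hA0, hC0⟩ := hzero
      have ht : t = 1 := by nlinarith
      refine ⟨fun _ => 0, ?_, ?_⟩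
      · rw [hmemD]
        refine ⟨⟨le_rfl, hα.le⟩, neg_nonpos.mpr (by positivity), by positivity⟩
      · rw [hΨ]
        simp only
        rw [hdecomp, hA0, hC0, ht]
        simp
    · set z : ℂ := ⟨A, Cc⟩ with hz
      have hzne : z ≠ 0 := by
        intro h
        rw [Complex.ext_iff] at h
        exact hzero ⟨h.1, h.2⟩
      have habs : ‖z‖ = Real.sqrt (A^2 + Cc^2) := by
        rw [Complex.norm_def]
        congr 1
        rw [Complex.normSq_mk]; ring
      have hsinθ' : Real.sin θ = ‖z‖ := by
        rw [habs]
        have hs0 : 0 ≤ Real.sin θ := Real.sin_nonneg_of_nonneg_of_le_pi hθ0 hθpi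
        nlinarith [Real.sq_sqrt (by positivity : (0:ℝ) ≤ A^2 + Cc^2),
          Real.sqrt_nonneg (A^2 + Cc^2)]
      set φ := z.arg with hφ
      have hφlo : -π < φ := Complex.neg_pi_lt_arg z
      have hφhi : φ ≤ π := Complex.arg_le_pi z
      have hA : A = Real.sin θ * Real.cos φ := by
        rw [hsinθ', hφ]
        rw [Complex.norm_mul_cos_arg z]
      have hC : Cc = Real.sin θ * Real.sin φ := by
        rw [hsinθ', hφ]
        rw [Complex.norm_mul_sin_arg z]
      set p : Fin 2 → ℝ := fun i => if i = 0 then θ else α * φ with hp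
      have hp0 : p 0 = θ := by simp [hp]
      have hp1 : p 1 = α * φ := by
        rw [hp]
        simp only [if_neg (by decide : ¬((1:Fin 2) = 0))]
      refine ⟨p, ?_, ?_⟩
      · rw [hmemD, hp0, hp1]
        refine ⟨⟨hθ0, hθα⟩, ?_, ?_⟩
        · have := mul_le_mul_of_nonneg_left hφlo.le hα.le
          linarith [this]
        · have := mul_le_mul_of_nonneg_left hφhi hα.le
          linarith [this]
      · rw [hΨ]
        simp only [hp0, hp1]
        rw [mul_div_cancel_left₀ _ hαne, hcosθ, ← hA, ← hC, ← hdecomp]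
  calc (μH[2] : Measure V3) (Metric.sphere (0:V3) 1 ∩ {σ | Real.cos α ≤ ⟪u, σ⟫_ℝ})
      ≤ (μH[2] : Measure V3) (Ψ '' D) := measure_mono hsubset
    _ ≤ ((5:ℝ≥0):ℝ≥0∞) ^ (2:ℝ) * (μH[2] : Measure (Fin 2 → ℝ)) D :=
        hlip.hausdorffMeasure_image_le (by norm_num)
    _ ≤ ENNReal.ofReal (50 * π * α^2) := by
        have hμD : (μH[(2:ℝ)] : Measure (Fin 2 → ℝ)) D = volume D := by
          have hh := MeasureTheory.hausdorffMeasure_pi_real (ι := Fin 2)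
          simp only [Fintype.card_fin, Nat.cast_ofNat] at hh
          rw [hh]
        rw [hμD, hD, volume_pi_pi, Fin.prod_univ_two,
          if_pos rfl, if_neg (by decide : ¬((1:Fin 2) = 0)), Real.volume_Icc, Real.volume_Icc]
        have h25 : ((5:ℝ≥0):ℝ≥0∞) ^ (2:ℝ) = ENNReal.ofReal 25 := by
          rw [show (2:ℝ) = ((2:ℕ):ℝ) by norm_num, ENNReal.rpow_natCast]
          rw [show ((5:ℝ≥0):ℝ≥0∞) = ENNReal.ofReal 5 by simp]
          rw [← ENNReal.ofReal_pow (by norm_num)]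
          norm_num
        rw [h25, ← ENNReal.ofReal_mul (by linarith), ← ENNReal.ofReal_mul (by linarith)]
        apply ENNReal.ofReal_le_ofReal
        nlinarith [Real.pi_pos, sq_nonneg α]

end AuxLemmas

/-- spherical integral bound on the large-deviation region
(estimate `A-2-2`). -/
theorem sphere_integral_large_deviation_bound
    (ν K : ℝ) (b : ℝ → ℝ)
    (hν : 0 < ν) (hν2 : ν < 2) (hK : 0 < K)
    (hb_meas : Measurable b) (hb_nonneg : ∀ t, 0 ≤ b t)
    (hb_zero : ∀ t < (0 : ℝ), b t = 0)
    (hb_upper : ∀ θ ∈ Set.Ioc (0 : ℝ) (Real.pi / 2),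
      b (Real.cos θ) ≤ K * θ ^ (-2 - ν)) :
    ∃ C : ℝ, 0 < C ∧ ∀ ξ ξs : V3, ξ ≠ 0 →
      (∫⁻ σ : V3,
          ENNReal.ofReal (b ⟪‖ξ‖⁻¹ • ξ, σ⟫_ℝ *
            (if jap ξs ≤ ‖ξ - ‖ξ‖ • σ‖ then 1 else 0)) ∂sphereMeasure)
        ≤ ENNReal.ofReal (C * (jap ξ / jap ξs) ^ ν *
            (if jap ξs ≤ Real.sqrt 2 * ‖ξ‖ then 1 else 0)) := by
  classical
  have h2ν : (1:ℝ) < (2:ℝ) ^ ν :=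
    (Real.one_lt_rpow_iff_of_pos (by norm_num)).mpr (Or.inl ⟨by norm_num, hν⟩)
  have hyν : (0:ℝ) < (2:ℝ) ^ ν := Real.rpow_pos_of_pos (by norm_num) _
  have h2ν2 : (0:ℝ) < (2:ℝ) ^ (2+ν) := Real.rpow_pos_of_pos (by norm_num) _
  set C : ℝ := 50 * Real.pi * K * (2:ℝ)^(2+ν) * (2:ℝ)^ν / ((2:ℝ)^ν - 1) with hCdef
  have hCpos : 0 < C := by
    apply div_pos _ (by linarith)
    have := Real.pi_pos
    positivity
  refine ⟨C, hCpos, ?_⟩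
  intro ξ ξs hξ
  simp only [sphereMeasure]
  set n := ‖ξ‖ with hndef
  have hn : 0 < n := norm_pos_iff.mpr hξ
  set a := jap ξs with hadef
  have ha1 : 1 ≤ a := jap_one_le ξs
  set u := n⁻¹ • ξ with hudef
  have hu : ‖u‖ = 1 := by
    rw [hudef, norm_smul, Real.norm_eq_abs, abs_of_pos (inv_pos.mpr hn), ← hndef]
    field_simp
  have hkey : ∀ σ : V3, ‖σ‖ = 1 → ‖ξ - n • σ‖^2 = 2*n^2*(1 - ⟪u, σ⟫_ℝ) := by
    intro σ hσ
    have h1 : ⟪ξ, n • σ⟫_ℝ = n * ⟪ξ, σ⟫_ℝ := real_inner_smul_right _ _ _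
    have h2 : ⟪u, σ⟫_ℝ = n⁻¹ * ⟪ξ, σ⟫_ℝ := by
      rw [hudef]; exact real_inner_smul_left _ _ _
    have h3 : ‖n • σ‖ = n := by
      rw [norm_smul, Real.norm_eq_abs, abs_of_pos hn, hσ, mul_one]
    have h4 : ⟪ξ, σ⟫_ℝ = n * ⟪u, σ⟫_ℝ := by
      rw [h2]; field_simp
    rw [norm_sub_sq_real, h1, h3, h4, ← hndef]
    ring
  by_cases hcase : a ≤ Real.sqrt 2 * n
  · -- main case
    rw [if_pos hcase, mul_one]
    set θ₀ := a / n with hθ₀def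
    have ha0 : 0 < a := lt_of_lt_of_le one_pos ha1
    have hθ₀pos : 0 < θ₀ := div_pos ha0 hn
    have hθ₀le : θ₀ ≤ Real.sqrt 2 := by
      rw [hθ₀def, div_le_iff₀ hn]; linarith [hcase]
    set α : ℕ → ℝ := fun k => (Real.pi/2) * (1/2)^k with hαdef
    have hαpos : ∀ k, 0 < α k := by
      intro k; rw [hαdef]
      have := Real.pi_pos
      positivity
    have hαsucc : ∀ k, α (k+1) = α k / 2 := by
      intro k; rw [hαdef]; simp only [pow_succ]; ring
    have hα0 : α 0 = Real.pi/2 := by rw [hαdef]; simp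
    have hαle : ∀ k, α k ≤ Real.pi/2 := by
      intro k
      rw [hαdef]
      have h12 : (1/2:ℝ)^k ≤ 1 := pow_le_one₀ (by norm_num) (by norm_num)
      nlinarith [Real.pi_pos]
    have hex : ∃ m : ℕ, α (m+1) ≤ θ₀ := by
      obtain ⟨m, hm⟩ := exists_pow_lt_of_lt_one hθ₀pos (by norm_num : (1/2:ℝ) < 1)
      refine ⟨m+1, ?_⟩
      have hπ4 := Real.pi_le_four
      have hp : (0:ℝ) < (1/2:ℝ)^m := by positivity
      have he : α (m+1+1) = (Real.pi/8) * (1/2)^m := by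
        rw [hαdef]
        simp only [pow_succ]
        ring
      rw [he]
      nlinarith
    set K₀ := Nat.find hex with hK₀def
    have hfind : α (K₀+1) ≤ θ₀ := Nat.find_spec hex
    have hlow : θ₀ / 2 < α (K₀ + 1) := by
      rcases Nat.eq_zero_or_pos K₀ with h0 | hpos'
    
      · rw [h0]
        have hs : Real.sqrt 2 < 3/2 := by
          rw [show (3/2:ℝ) = Real.sqrt ((3/2)^2) by rw [Real.sqrt_sq (by norm_num : (0:ℝ) ≤ 3/2)]]
          apply Real.sqrt_lt_sqrt <;> norm_num
        have hα1 : α (0+1) = Real.pi/4 := by rw [hαdef]; simp only [pow_one, zero_add]; ring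
        rw [hα1]
        nlinarith [Real.pi_gt_three]
      · have hK1 : K₀ - 1 < K₀ := Nat.sub_lt hpos' one_pos
        have hmin := Nat.find_min hex hK1
        push_neg at hmin
        rw [Nat.sub_add_cancel (by omega : 1 ≤ K₀)] at hmin
        rw [hαsucc]
        linarith
    set Ak : ℕ → Set V3 :=
      fun k => {σ | ⟪u, σ⟫_ℝ ∈ Set.Icc (Real.cos (α k)) (Real.cos (α (k+1)))} with hAkdef
    have hAkm : ∀ k, MeasurableSet (Ak k) := by
      intro k
      have hcont : Continuous fun σ : V3 => ⟪u, σ⟫_ℝ := continuous_const.inner continuous_id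
      exact hcont.measurable measurableSet_Icc
    set ck : ℕ → ℝ := fun k => K * (α (k+1)) ^ (-2 - ν) with hckdef
    have hck0 : ∀ k, 0 ≤ ck k := by
      intro k
      have := Real.rpow_pos_of_pos (hαpos (k+1)) (-2-ν)
      rw [hckdef]
      positivity
    set g : V3 → ℝ≥0∞ := fun σ => ∑ k ∈ Finset.range (K₀+1),
      (Ak k).indicator (fun _ => ENNReal.ofReal (ck k)) σ with hgdef
    have hgmeas : Measurable g := by
      rw [hgdef]
      exact Finset.measurable_sum _ (fun k _ => measurable_const.indicator (hAkm k))
    have hpt : ∀ σ ∈ Metric.sphere (0:V3) 1,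
        ENNReal.ofReal (b ⟪u, σ⟫_ℝ * (if a ≤ ‖ξ - n • σ‖ then 1 else 0)) ≤ g σ := by
      intro σ hσ'
      have hσ : ‖σ‖ = 1 := by simpa using hσ'
      set t := ⟪u, σ⟫_ℝ with htdef
      rcases lt_or_ge t 0 with hneg | ht0
      · rw [hb_zero _ hneg, zero_mul, ENNReal.ofReal_zero]; exact zero_le
      by_cases hind : a ≤ ‖ξ - n • σ‖
      swap
      · rw [if_neg hind, mul_zero, ENNReal.ofReal_zero]; exact zero_le
      rw [if_pos hind, mul_one]
      have habs : |t| ≤ 1 := by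
        have h := abs_real_inner_le_norm u σ
        rw [hu, hσ, one_mul] at h
        exact h
      have ht1 : t ≤ 1 := le_trans (le_abs_self t) habs
      have htm1 : (-1:ℝ) ≤ t := by
        have := neg_abs_le t
        linarith [habs]
      set θ := Real.arccos t with hθdef
      have hθ0 : 0 ≤ θ := Real.arccos_nonneg t
      have hθpi2 : θ ≤ Real.pi/2 := Real.arccos_le_pi_div_two.mpr ht0
      have hθpi : θ ≤ Real.pi := Real.arccos_le_pi t
      have hcosθ : Real.cos θ = t := Real.cos_arccos htm1 ht1
      have hsq : a^2 ≤ 2*n^2*(1-t) := by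
        have hsq' : a^2 ≤ ‖ξ - n • σ‖^2 := pow_le_pow_left₀ ha0.le hind 2
        rw [hkey σ hσ] at hsq'
        exact hsq'
      have hquad : 1 - θ^2/2 ≤ t := by
        rw [← hcosθ]; exact Real.one_sub_sq_div_two_le_cos
      have hθ₀θ : θ₀ ≤ θ := by
        have h1 : a^2 ≤ (n*θ)^2 := by nlinarith
        have h2 : a ≤ n * θ := by nlinarith [mul_nonneg hn.le hθ0, ha0]
        rw [hθ₀def, div_le_iff₀ hn]
        linarith [h2]
      have hθpos : 0 < θ := lt_of_lt_of_le hθ₀pos hθ₀θ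
      have hexk : ∃ m : ℕ, α (m+1) ≤ θ := ⟨K₀, le_trans hfind hθ₀θ⟩
      set k := Nat.find hexk with hkdef
      have hkspec : α (k+1) ≤ θ := Nat.find_spec hexk
      have hkle : k ≤ K₀ := Nat.find_min' hexk (le_trans hfind hθ₀θ)
      have hθk : θ ≤ α k := by
        rcases Nat.eq_zero_or_pos k with h0 | hposk
        · rw [h0, hα0]; exact hθpi2
        · have hmin := Nat.find_min hexk (Nat.sub_lt hposk one_pos)
          push_neg at hmin
          rw [Nat.sub_add_cancel (by omega : 1 ≤ k)] at hmin
          exact hmin.le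
      have hαkpi : α k ≤ Real.pi := by linarith [hαle k, Real.pi_pos]
      have hmem : σ ∈ Ak k := by
        have hm1 : Real.cos (α k) ≤ t := by
          rw [← hcosθ]
          exact Real.cos_le_cos_of_nonneg_of_le_pi hθ0 hαkpi hθk
        have hm2 : t ≤ Real.cos (α (k+1)) := by
          rw [← hcosθ]
          exact Real.cos_le_cos_of_nonneg_of_le_pi (hαpos (k+1)).le hθpi hkspec
        exact ⟨hm1, hm2⟩
      have hbt : b t ≤ ck k := by
        have h1 := hb_upper θ ⟨hθpos, hθpi2⟩
        rw [hcosθ] at h1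
        have h2 : θ ^ (-2-ν) ≤ (α (k+1)) ^ (-2-ν) :=
          Real.rpow_le_rpow_of_nonpos (hαpos (k+1)) hkspec (by linarith)
        calc b t ≤ K * θ^(-2-ν) := h1
          _ ≤ K * (α (k+1))^(-2-ν) := mul_le_mul_of_nonneg_left h2 hK.le
      calc ENNReal.ofReal (b t) ≤ ENNReal.ofReal (ck k) := ENNReal.ofReal_le_ofReal hbt
        _ = (Ak k).indicator (fun _ => ENNReal.ofReal (ck k)) σ :=
            (Set.indicator_of_mem hmem (fun _ => ENNReal.ofReal (ck k))).symm
        _ ≤ g σ := by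
            rw [hgdef]
            exact Finset.single_le_sum
              (f := fun j => (Ak j).indicator (fun _ => ENNReal.ofReal (ck j)) σ)
              (fun i _ => zero_le) (Finset.mem_range.mpr (Nat.lt_succ_of_le hkle))
    -- sum bound (real arithmetic)
    have hpw : ∀ x : ℝ, 0 < x → ∀ (z : ℝ) (m : ℕ), (x^m)^z = (x^z)^m := by
      intro x hx z m
      rw [← Real.rpow_natCast x m, ← Real.rpow_mul hx.le, mul_comm, Real.rpow_mul hx.le,
        Real.rpow_natCast]
    have hαν : ∀ k : ℕ, (α k)^(-ν) = (Real.pi/2)^(-ν) * ((2:ℝ)^ν)^k := by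
      intro k
      rw [hαdef]
      have hpi2 : (0:ℝ) ≤ Real.pi/2 := by linarith [Real.pi_pos]
      rw [Real.mul_rpow hpi2 (by positivity), hpw (1/2) (by norm_num) (-ν) k]
      congr 2
      rw [one_div, Real.inv_rpow (by norm_num : (0:ℝ) ≤ 2), ← Real.rpow_neg_one,
        ← Real.rpow_mul (by norm_num : (0:ℝ) ≤ 2)]
      norm_num
    have hterm : ∀ k : ℕ, ck k * (50*Real.pi*(α k)^2)
        = (50*Real.pi*K*(2:ℝ)^(2+ν)) * (α k)^(-ν) := by
      intro k
      have h1 : (α (k+1)) ^ (-2-ν) = (2:ℝ)^(2+ν) * (α k)^(-2-ν) := by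
        rw [hαsucc, Real.div_rpow (hαpos k).le (by norm_num : (0:ℝ) ≤ 2),
          show (-2-ν) = -(2+ν) by ring, Real.rpow_neg (by norm_num : (0:ℝ) ≤ 2),
          div_inv_eq_mul]
        ring
      have h2 : (α k)^(-(2+ν)) * (α k)^2 = (α k)^(-ν) := by
        rw [← Real.rpow_natCast (α k) 2, ← Real.rpow_add (hαpos k)]
        norm_num
      rw [hckdef]
      calc K * (α (k+1)) ^ (-2-ν) * (50*Real.pi*(α k)^2)
          = (50*Real.pi*K*(2:ℝ)^(2+ν)) * ((α k)^(-(2+ν)) * (α k)^2) := by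
            rw [h1, show (-2-ν) = -(2+ν) by ring]; ring
        _ = (50*Real.pi*K*(2:ℝ)^(2+ν)) * (α k)^(-ν) := by rw [h2]
    set y := (2:ℝ)^ν with hydef
    have hgeom : ∑ k ∈ Finset.range (K₀+1), y^k ≤ y^(K₀+1)/(y-1) := by
      rw [geom_sum_eq (ne_of_gt h2ν)]
      gcongr
      · linarith
    have hsum : ∑ k ∈ Finset.range (K₀+1), ck k * (50*Real.pi*(α k)^2)
        ≤ C * (jap ξ / a)^ν := by
      set B := 50*Real.pi*K*(2:ℝ)^(2+ν) with hB
      have hBpos : 0 < B := by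
        have := Real.pi_pos
        rw [hB]; positivity
      have hπ2ν : (0:ℝ) ≤ (Real.pi/2)^(-ν) :=
        (Real.rpow_pos_of_pos (by linarith [Real.pi_pos]) _).le
      have hsum1 : ∑ k ∈ Finset.range (K₀+1), ck k * (50*Real.pi*(α k)^2)
          = B * ((Real.pi/2)^(-ν) * ∑ k ∈ Finset.range (K₀+1), y^k) := by
        rw [Finset.mul_sum, Finset.mul_sum]
        apply Finset.sum_congr rfl
        intro k _
        rw [hterm k, hαν k]
      have hs3 : (Real.pi/2)^(-ν) * y^(K₀+1) = (α (K₀+1))^(-ν) := (hαν (K₀+1)).symm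
      have hs4 : (α (K₀+1))^(-ν) ≤ (θ₀/2)^(-ν) :=
        Real.rpow_le_rpow_of_nonpos (by positivity) hlow.le (by linarith)
      have hs5 : (θ₀/2)^(-ν) = y * θ₀^(-ν) := by
        rw [Real.div_rpow hθ₀pos.le (by norm_num : (0:ℝ) ≤ 2),
          Real.rpow_neg (by norm_num : (0:ℝ) ≤ 2), div_inv_eq_mul, hydef]
        ring
      have hs6 : θ₀^(-ν) = (n/a)^ν := by
        rw [hθ₀def, Real.rpow_neg (by positivity), ← Real.inv_rpow (by positivity), inv_div]
      have hs7 : (n/a)^ν ≤ (jap ξ / a)^ν := by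
        apply Real.rpow_le_rpow (by positivity) _ hν.le
        exact (div_le_div_iff_of_pos_right ha0).mpr (norm_le_jap ξ)
      calc ∑ k ∈ Finset.range (K₀+1), ck k * (50*Real.pi*(α k)^2)
          = B * ((Real.pi/2)^(-ν) * ∑ k ∈ Finset.range (K₀+1), y^k) := hsum1
        _ ≤ B * ((Real.pi/2)^(-ν) * (y^(K₀+1)/(y-1))) := by
            apply mul_le_mul_of_nonneg_left _ hBpos.le
            exact mul_le_mul_of_nonneg_left hgeom hπ2ν
        _ = B * ((α (K₀+1))^(-ν) / (y-1)) := by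
            rw [← mul_div_assoc, hs3]
        _ ≤ B * ((θ₀/2)^(-ν) / (y-1)) := by
            apply mul_le_mul_of_nonneg_left _ hBpos.le
            exact (div_le_div_iff_of_pos_right (by linarith : (0:ℝ) < y - 1)).mpr hs4
        _ = C * θ₀^(-ν) := by
            rw [hs5, hCdef, hB]
            ring
        _ ≤ C * (jap ξ / a)^ν := by
            rw [hs6]
            exact mul_le_mul_of_nonneg_left hs7 hCpos.le
    refine le_trans (setLIntegral_mono hgmeas hpt) ?_
    calc (∫⁻ σ in Metric.sphere (0:V3) 1, g σ ∂(μH[2]))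
        = ∑ k ∈ Finset.range (K₀+1), ∫⁻ σ in Metric.sphere (0:V3) 1,
            (Ak k).indicator (fun _ => ENNReal.ofReal (ck k)) σ ∂(μH[2]) := by
          rw [hgdef]
          exact lintegral_finset_sum _ (fun k _ => measurable_const.indicator (hAkm k))
      _ ≤ ∑ k ∈ Finset.range (K₀+1), ENNReal.ofReal (ck k * (50*Real.pi*(α k)^2)) := by
          apply Finset.sum_le_sum
          intro k _
          rw [lintegral_indicator (hAkm k), setLIntegral_const,
            Measure.restrict_apply (hAkm k)]
          have hsub : Ak k ∩ Metric.sphere (0:V3) 1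
              ⊆ Metric.sphere (0:V3) 1 ∩ {σ | Real.cos (α k) ≤ ⟪u, σ⟫_ℝ} := by
            rintro x ⟨hx1, hx2⟩
            exact ⟨hx2, hx1.1⟩
          have hcap := le_trans (measure_mono hsub)
            (cap_measure_le u hu (α k) (hαpos k) (hαle k))
          calc ENNReal.ofReal (ck k) * (μH[2] : Measure V3) (Ak k ∩ Metric.sphere 0 1)
              ≤ ENNReal.ofReal (ck k) * ENNReal.ofReal (50*Real.pi*(α k)^2) :=
                by gcongr
            _ = ENNReal.ofReal (ck k * (50*Real.pi*(α k)^2)) :=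
                (ENNReal.ofReal_mul (hck0 k)).symm
      _ = ENNReal.ofReal (∑ k ∈ Finset.range (K₀+1), ck k * (50*Real.pi*(α k)^2)) := by
          refine (ENNReal.ofReal_sum_of_nonneg (fun i _ => ?_)).symm
          have := Real.pi_pos
          have := hck0 i
          positivity
      _ ≤ ENNReal.ofReal (C * (jap ξ / a)^ν) := ENNReal.ofReal_le_ofReal hsum
  · -- degenerate case : integrand vanishes
    rw [if_neg hcase]
    push_neg at hcase
    have hz : ∀ σ ∈ Metric.sphere (0:V3) 1,
        ENNReal.ofReal (b ⟪u, σ⟫_ℝ * (if a ≤ ‖ξ - n • σ‖ then 1 else 0))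
          ≤ (fun _ : V3 => (0:ℝ≥0∞)) σ := by
      intro σ hσ'
      have hσ : ‖σ‖ = 1 := by simpa using hσ'
      rcases lt_or_ge ⟪u, σ⟫_ℝ 0 with hneg | hpos
      · rw [hb_zero _ hneg, zero_mul, ENNReal.ofReal_zero]
      · have hsq : ‖ξ - n • σ‖^2 ≤ (Real.sqrt 2 * n)^2 := by
          rw [hkey σ hσ, mul_pow, Real.sq_sqrt (by norm_num : (0:ℝ) ≤ 2)]
          nlinarith
        have h4 : ‖ξ - n • σ‖ ≤ Real.sqrt 2 * n := by
          nlinarith [norm_nonneg (ξ - n • σ), mul_nonneg (Real.sqrt_nonneg 2) hn.le]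
        have hlt : ‖ξ - n • σ‖ < a := lt_of_le_of_lt h4 hcase
        rw [if_neg (not_le.mpr hlt), mul_zero, ENNReal.ofReal_zero]
    refine le_trans (setLIntegral_mono measurable_const hz) ?_
    simp


end
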